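/- Let g be an M♮-convex function with finite nonempty effective domain and let b : E → {0,1}. Let {x_k}_{k=k̲}^{k̄} be a sequence such that x_k ∈ 𝒯_k for all k and, for each k ∈ {k̲+1, …, k̄}, x_{k−1} = x_k − χ_{u_k} + χ_{v_k} for some minimum transition (u_k, v_k) with respect to x_k. Assume k̲ + 1 ≤ k̄ and suppose there exists an index j ∈ {k̲+1, …, k̄} such that g(x_j) < g(x_{j−1}). Then for every k ∈ {k̲, …, j}, the point x_k is a supported Pareto optimal point of the biobjective problem of minimizing (g(x), ⟨b,x⟩) over x ∈ dom g: x_k is Pareto optimal and there exist real numbers λ₁ > 0 and λ₂ > 0 such that λ₁ g(x_k) + λ₂ ⟨b,x_k⟩ ≤ λ₁ g(y) + λ₂ ⟨b,y⟩ for all y ∈ dom g. -/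

import Mathlib

open scoped BigOperators

/-- Characteristic vector of a singleton `{u}`. -/
def chiv {E : Type*} [DecidableEq E] (u : E) : E → ℤ := fun e => if e = u then 1 else 0

/-- Characteristic vector allowing the dummy symbol `z` (modelled as `none`), with `χ_z = 0`. -/
def chiOpt {E : Type*} [DecidableEq E] (v : Option E) : E → ℤ :=
  fun e => match v with
  | none => 0
  | some w => chiv w e

/-- M♮-convexity (with nonempty effective domain) for `g : (E → ℤ) → ℝ ∪ {+∞}`. -/
def MnatConvex {E : Type*} [DecidableEq E] (g : (E → ℤ) → WithTop ℝ) : Prop :=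
  (∃ x, g x < ⊤) ∧
  ∀ x y : E → ℤ, g x < ⊤ → g y < ⊤ → ∀ u : E, y u < x u →
    (g (x - chiv u) + g (y + chiv u) ≤ g x + g y) ∨
    (∃ v : E, x v < y v ∧
      g (x - chiv u + chiv v) + g (y + chiv u - chiv v) ≤ g x + g y)

/-- `⟨b,x⟩ = ∑ e, b e * x e`. -/
def innerb {E : Type*} [Fintype E] (b : E → ℤ) (x : E → ℤ) : ℤ := ∑ e, b e * x e

/-- `𝒯_i`: the minimizers of `g` on `𝒫_i = {x ∈ dom g : ⟨b,x⟩ = i}`. -/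
def Tset {E : Type*} [Fintype E] (g : (E → ℤ) → WithTop ℝ) (b : E → ℤ) (i : ℤ) :
    Set (E → ℤ) :=
  {x | g x < ⊤ ∧ innerb b x = i ∧ ∀ y : E → ℤ, g y < ⊤ → innerb b y = i → g x ≤ g y}

/-- A transition `(u,v)` with respect to `x`: `u ∈ E₁`, `v ∈ E₀ ∪ {z}`, and
`x - χ_u + χ_v ∈ dom g`. -/
def IsTransition {E : Type*} [DecidableEq E] (g : (E → ℤ) → WithTop ℝ) (b : E → ℤ)
    (x : E → ℤ) (u : E) (v : Option E) : Prop :=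
  b u = 1 ∧ (∀ w : E, v = some w → b w = 0) ∧ g (x - chiv u + chiOpt v) < ⊤

/-- The cost `g(x;u,v) = g(x - χ_u + χ_v) - g(x)` of a transition (as a real number;
both values are finite for transitions with respect to `x ∈ dom g`). -/
noncomputable def transCost {E : Type*} [DecidableEq E] (g : (E → ℤ) → WithTop ℝ)
    (x : E → ℤ) (u : E) (v : Option E) : ℝ :=
  WithTop.untopD 0 (g (x - chiv u + chiOpt v)) - WithTop.untopD 0 (g x)

/-- A minimum transition with respect to `x`. -/
def IsMinTransition {E : Type*} [Fintype E] [DecidableEq E] (g : (E → ℤ) → WithTop ℝ)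
    (b : E → ℤ) (x : E → ℤ) (u : E) (v : Option E) : Prop :=
  IsTransition g b x u v ∧
    ∀ (u' : E) (v' : Option E), IsTransition g b x u' v' →
      transCost g x u v ≤ transCost g x u' v'

set_option linter.unusedSectionVars false

section StmtAux
variable {E : Type*} [Fintype E] [DecidableEq E]

lemma innerb_add (b x y : E → ℤ) : innerb b (x + y) = innerb b x + innerb b y := by
  simp [innerb, mul_add, Finset.sum_add_distrib]

lemma innerb_sub (b x y : E → ℤ) : innerb b (x - y) = innerb b x - innerb b y := by
  simp [innerb, mul_sub, Finset.sum_sub_distrib]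

lemma innerb_chiv (b : E → ℤ) (u : E) : innerb b (chiv u) = b u := by
  simp [innerb, chiv, mul_ite, Finset.sum_ite_eq, Finset.sum_ite_eq']

lemma untopLe {a c : WithTop ℝ} (hc : c < ⊤) (h : a ≤ c) : WithTop.untopD 0 a ≤ WithTop.untopD 0 c := by
  lift c to ℝ using hc.ne
  lift a to ℝ using (lt_of_le_of_lt h hc).ne
  simp only [WithTop.untopD_coe]
  exact_mod_cast h

lemma untopLt {a c : WithTop ℝ} (hc : c < ⊤) (h : a < c) : WithTop.untopD 0 a < WithTop.untopD 0 c := by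
  lift c to ℝ using hc.ne
  lift a to ℝ using (lt_of_lt_of_le h le_top).ne
  simp only [WithTop.untopD_coe]
  exact_mod_cast h

lemma lift4 {a b c d : WithTop ℝ} (hc : c < ⊤) (hd : d < ⊤) (h : a + b ≤ c + d) :
    (a < ⊤ ∧ b < ⊤) ∧ WithTop.untopD 0 a + WithTop.untopD 0 b ≤ WithTop.untopD 0 c + WithTop.untopD 0 d := by
  lift c to ℝ using hc.ne
  lift d to ℝ using hd.ne
  have hab : a + b < ⊤ := lt_of_le_of_lt h (by exact_mod_cast WithTop.coe_lt_top (c + d))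
  have ha : a < ⊤ := (WithTop.add_lt_top.1 hab).1
  have hb : b < ⊤ := (WithTop.add_lt_top.1 hab).2
  refine ⟨⟨ha, hb⟩, ?_⟩
  lift a to ℝ using ha.ne
  lift b to ℝ using hb.ne
  simp only [WithTop.untopD_coe]
  exact_mod_cast h

lemma coeUntop {a : WithTop ℝ} (ha : a < ⊤) : a = ((WithTop.untopD 0 a : ℝ) : WithTop ℝ) := by
  lift a to ℝ using ha.ne; simp

lemma convex3 (g : (E → ℤ) → WithTop ℝ) (b : E → ℤ)
    (hg : MnatConvex g) (hb : ∀ e, b e = 0 ∨ b e = 1) (k : ℤ)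
    (xk : E → ℤ) (hxkk : xk ∈ Tset g b k) :
    ∀ n : ℕ, ∀ x y : E → ℤ, x ∈ Tset g b (k-1) → y ∈ Tset g b (k+1) →
      (∑ e, (y e - x e).natAbs) = n →
      WithTop.untopD 0 (g xk) + WithTop.untopD 0 (g xk) ≤ WithTop.untopD 0 (g x) + WithTop.untopD 0 (g y) := by
  intro n
  induction n using Nat.strong_induction_on with
  | _ n IH =>
  intro x y hx hy hn
  -- find u with b u = 1 and x u < y u
  have hsum : ∑ e, b e * (y e - x e) = 2 := by
    have h1 := hx.2.1
    have h2 := hy.2.1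
    have : ∑ e, b e * (y e - x e) = innerb b y - innerb b x := by
      simp [innerb, mul_sub, Finset.sum_sub_distrib]
    rw [this, h1, h2]; ring
  have hex : ∃ e ∈ Finset.univ (α := E), (0:ℤ) < b e * (y e - x e) := by
    apply Finset.exists_lt_of_sum_lt (f := fun _ => (0:ℤ))
    rw [hsum]; simp
  obtain ⟨u, -, hu⟩ := hex
  have hbu : b u = 1 := by rcases hb u with h | h <;> [skip; exact h]; rw [h] at hu; omega
  have hxyu : x u < y u := by rw [hbu, one_mul] at hu; omega
  -- exchange
  rcases hg.2 y x hy.1 hx.1 u hxyu with h | ⟨v, hv, h⟩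
  · -- case (i)
    have hfin2 : g y + g x < ⊤ := WithTop.add_lt_top.2 ⟨hy.1, hx.1⟩
    obtain ⟨⟨hf1, hf2⟩, hreal⟩ := lift4 hy.1 hx.1 h
    have l1 : innerb b (y - chiv u) = k := by
      rw [innerb_sub, innerb_chiv, hy.2.1, hbu]; ring
    have l2 : innerb b (x + chiv u) = k := by
      rw [innerb_add, innerb_chiv, hx.2.1, hbu]; ring
    have m1 := untopLe hf1 (hxkk.2.2 _ hf1 l1)
    have m2 := untopLe hf2 (hxkk.2.2 _ hf2 l2)
    linarith
  · -- case (ii)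
    obtain ⟨⟨hf1, hf2⟩, hreal⟩ := lift4 hy.1 hx.1 h
    rcases hb v with hbv | hbv
    · -- b v = 0 : both new points at level k
      have l1 : innerb b (y - chiv u + chiv v) = k := by
        rw [innerb_add, innerb_sub, innerb_chiv, innerb_chiv, hy.2.1, hbu, hbv]; ring
      have l2 : innerb b (x + chiv u - chiv v) = k := by
        rw [innerb_sub, innerb_add, innerb_chiv, innerb_chiv, hx.2.1, hbu, hbv]; ring
      have m1 := untopLe hf1 (hxkk.2.2 _ hf1 l1)
      have m2 := untopLe hf2 (hxkk.2.2 _ hf2 l2)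
      linarith
    · -- b v = 1 : new points at levels k+1 and k-1; recurse with smaller distance
      set y' := y - chiv u + chiv v with hy'def
      set x' := x + chiv u - chiv v with hx'def
      have l1 : innerb b y' = k + 1 := by
        rw [hy'def, innerb_add, innerb_sub, innerb_chiv, innerb_chiv, hy.2.1, hbu, hbv]; ring
      have l2 : innerb b x' = k - 1 := by
        rw [hx'def, innerb_sub, innerb_add, innerb_chiv, innerb_chiv, hx.2.1, hbu, hbv]; ring
      have m1 : g y ≤ g y' := hy.2.2 _ hf1 l1
      have m2 : g x ≤ g x' := hx.2.2 _ hf2 l2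
      have r1 := untopLe hf1 m1
      have r2 := untopLe hf2 m2
      have heq : WithTop.untopD 0 (g y') = WithTop.untopD 0 (g y) := by linarith
      have hgy' : g y' = g y := by
        rw [coeUntop hf1, coeUntop hy.1, heq]
      have hy' : y' ∈ Tset g b (k+1) :=
        ⟨hf1, l1, fun w hw1 hw2 => hgy' ▸ hy.2.2 w hw1 hw2⟩
      have hne : u ≠ v := by
        intro hh; rw [hh] at hxyu; omega
      have hlt : (∑ e, (y' e - x e).natAbs) < n := by
        rw [← hn]
        apply Finset.sum_lt_sum
        · intro e _
          by_cases he : e = u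
          · subst he
            simp only [hy'def, Pi.add_apply, Pi.sub_apply, chiv, eq_self_iff_true, if_true, if_neg hne]
            omega
          · by_cases he2 : e = v
            · subst he2
              simp only [hy'def, Pi.add_apply, Pi.sub_apply, chiv, eq_self_iff_true, if_true,
                if_neg (Ne.symm hne)]
              omega
            · simp only [hy'def, Pi.add_apply, Pi.sub_apply, chiv, if_neg he, if_neg he2]
              omega
        · refine ⟨u, Finset.mem_univ u, ?_⟩
          simp only [hy'def, Pi.add_apply, Pi.sub_apply, chiv, eq_self_iff_true, if_true, if_neg hne]
          omega
      have := IH _ hlt x y' hx hy' rfl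
      rw [heq] at this
      exact this

end StmtAux

theorem stmt_8' {E : Type*} [Fintype E] [DecidableEq E] [Nonempty E]
    (g : (E → ℤ) → WithTop ℝ) (b : E → ℤ)
    (hg : MnatConvex g)
    (hfin : {x : E → ℤ | g x < ⊤}.Finite)
    (hb : ∀ e : E, b e = 0 ∨ b e = 1)
    (kmin kmax : ℤ)
    (hkmin : (Tset g b kmin).Nonempty ∧ ∀ k : ℤ, (Tset g b k).Nonempty → kmin ≤ k)
    (hkmax : (Tset g b kmax).Nonempty ∧ ∀ k : ℤ, (Tset g b k).Nonempty → k ≤ kmax)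
    (x : ℤ → (E → ℤ))
    (hxk : ∀ k : ℤ, kmin ≤ k → k ≤ kmax → x k ∈ Tset g b k)
    (hgap : kmin + 1 ≤ kmax)
    (j : ℤ) (hj1 : kmin + 1 ≤ j) (hj2 : j ≤ kmax)
    (hgj : g (x j) < g (x (j - 1))) :
    ∀ k : ℤ, kmin ≤ k → k ≤ j →
      (¬∃ y : E → ℤ, g y < ⊤ ∧ g y ≤ g (x k) ∧ innerb b y ≤ innerb b (x k) ∧
        ¬(g y = g (x k) ∧ innerb b y = innerb b (x k))) ∧
      (∃ l1 l2 : ℝ, 0 < l1 ∧ 0 < l2 ∧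
        ∀ y : E → ℤ, g y < ⊤ →
          l1 * WithTop.untopD 0 (g (x k)) + l2 * (innerb b (x k) : ℝ) ≤
            l1 * WithTop.untopD 0 (g y) + l2 * (innerb b y : ℝ)) := by
  -- levels of domain points lie in [kmin, kmax]
  have hTne : ∀ y : E → ℤ, g y < ⊤ → (Tset g b (innerb b y)).Nonempty := by
    intro y hy
    have hfin' : {w : E → ℤ | g w < ⊤ ∧ innerb b w = innerb b y}.Finite :=
      hfin.subset (fun w hw => hw.1)
    obtain ⟨m, hm, hmin⟩ := Set.exists_min_image _ g hfin' ⟨y, hy, rfl⟩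
    exact ⟨m, hm.1, hm.2, fun w hw1 hw2 => hmin w ⟨hw1, hw2⟩⟩
  have hlev : ∀ y : E → ℤ, g y < ⊤ → kmin ≤ innerb b y ∧ innerb b y ≤ kmax :=
    fun y hy => ⟨hkmin.2 _ (hTne y hy), hkmax.2 _ (hTne y hy)⟩
  set φ : ℤ → ℝ := fun m => WithTop.untopD 0 (g (x m)) with hφ
  have hdomx : ∀ m : ℤ, kmin ≤ m → m ≤ kmax → g (x m) < ⊤ :=
    fun m h1 h2 => (hxk m h1 h2).1
  -- lower bound: any domain point dominates its level minimizer
  have hlb : ∀ y : E → ℤ, g y < ⊤ → φ (innerb b y) ≤ WithTop.untopD 0 (g y) := by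
    intro y hy
    have h1 := (hlev y hy).1
    have h2 := (hlev y hy).2
    exact untopLe hy ((hxk _ h1 h2).2.2 y hy rfl)
  -- convexity: differences are nonincreasing
  have hconv : ∀ m : ℤ, kmin ≤ m - 1 → m + 1 ≤ kmax →
      φ m - φ (m+1) ≤ φ (m-1) - φ m := by
    intro m h1 h2
    have hx1 : x (m-1) ∈ Tset g b (m-1) := hxk _ h1 (by omega)
    have hy1 : x (m+1) ∈ Tset g b (m+1) := hxk _ (by omega) h2
    have hm : x m ∈ Tset g b m := hxk _ (by omega) (by omega)
    have := convex3 g b hg hb m (x m) hm _ (x (m-1)) (x (m+1)) hx1 hy1 rfl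
    simp only [hφ] at *
    linarith
  -- chain: d is nonincreasing on [kmin+1, kmax]
  have hchain : ∀ a c : ℤ, kmin + 1 ≤ a → a ≤ c → c ≤ kmax →
      φ (c-1) - φ c ≤ φ (a-1) - φ a := by
    intro a c ha hac
    refine Int.leInduction
      (motive := fun c _ => c ≤ kmax → φ (c-1) - φ c ≤ φ (a-1) - φ a) ?_ ?_ c hac
    · intro _; exact le_refl _
    · intro c hc IH hc1
      have step := hconv c (by omega) (by omega)
      have e : (c+1) - 1 = c := by ring
      have step2 : φ ((c+1)-1) - φ (c+1) ≤ φ (c-1) - φ c := by rw [e]; exact step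
      linarith [IH (by omega)]
  have hdj : (0:ℝ) < φ (j-1) - φ j := by
    have := untopLt (hdomx (j-1) (by omega) (by omega)) hgj
    simp only [hφ]; linarith
  have hdpos : ∀ m : ℤ, kmin + 1 ≤ m → m ≤ j → (0:ℝ) < φ (m-1) - φ m :=
    fun m h1 h2 => lt_of_lt_of_le hdj (hchain m j h1 h2 hj2)
  -- φ strictly decreasing up to j
  have hmono : ∀ i k : ℤ, kmin ≤ i → i < k → k ≤ j → φ k < φ i := by
    intro i k hi hik
    have hik' : i + 1 ≤ k := hik
    refine Int.leInduction (motive := fun k _ => k ≤ j → φ k < φ i) ?_ ?_ k hik'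
    · intro h
      have := hdpos (i+1) (by omega) h
      have e : (i+1) - 1 = i := by ring
      rw [e] at this; linarith
    · intro k hk IH h
      have h1 := hdpos (k+1) (by omega) h
      have e : (k+1) - 1 = k := by ring
      rw [e] at h1
      have := IH (by omega)
      linarith
  intro k hk1 hk2
  have hk3 : k ≤ kmax := le_trans hk2 hj2
  have hxkT := hxk k hk1 hk3
  have hbxk : innerb b (x k) = k := hxkT.2.1
  constructor
  · rintro ⟨y, hy1, hy2, hy3, hy4⟩
    have hik : innerb b y ≤ k := by rwa [hbxk] at hy3
    rcases eq_or_lt_of_le hik with heq | hlt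
    · have hge : g (x k) ≤ g y := hxkT.2.2 y hy1 heq
      exact hy4 ⟨le_antisymm hy2 hge, by rw [hbxk, heq]⟩
    · have h1 : φ k < φ (innerb b y) := hmono _ k (hlev y hy1).1 hlt hk2
      have h2 : φ (innerb b y) ≤ WithTop.untopD 0 (g y) := hlb y hy1
      have h3 : WithTop.untopD 0 (g y) ≤ φ k := untopLe hxkT.1 hy2
      linarith
  · -- supported part
    have key : ∀ l2 : ℝ,
        (∀ m : ℤ, kmin + 1 ≤ m → m ≤ k → l2 ≤ φ (m-1) - φ m) →
        (∀ m : ℤ, k + 1 ≤ m → m ≤ kmax → φ (m-1) - φ m ≤ l2) →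
        ∀ i : ℤ, kmin ≤ i → i ≤ kmax → φ k + l2 * k ≤ φ i + l2 * i := by
      intro l2 hlo hhi i hi1 hi2
      rcases le_total i k with h | h
      · have main : ∀ n : ℤ, i ≤ n → n ≤ k → φ n + l2 * n ≤ φ i + l2 * i := by
          intro n hn
          refine Int.leInduction
            (motive := fun n _ => n ≤ k → φ n + l2 * n ≤ φ i + l2 * i) ?_ ?_ n hn
          · intro _; exact le_refl _
          · intro n hn IH hnk
            have step := hlo (n+1) (by omega) hnk
            have e : (n+1) - 1 = n := by ring
            rw [e] at step
            have := IH (by omega)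
            push_cast
            push_cast at this
            linarith
        exact main k h le_rfl
      · have main : ∀ n : ℤ, k ≤ n → n ≤ kmax → φ k + l2 * k ≤ φ n + l2 * n := by
          intro n hn
          refine Int.leInduction
            (motive := fun n _ => n ≤ kmax → φ k + l2 * k ≤ φ n + l2 * n) ?_ ?_ n hn
          · intro _; exact le_refl _
          · intro n hn IH hnm
            have step := hhi (n+1) (by omega) hnm
            have e : (n+1) - 1 = n := by ring
            rw [e] at step
            have := IH (by omega)
            push_cast
            push_cast at this
            linarith
        exact main i h hi2
    rcases eq_or_lt_of_le hk1 with hkeq | hklt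
    · -- k = kmin
      refine ⟨1, max (φ kmin - φ (kmin+1)) 1, one_pos,
        lt_of_lt_of_le one_pos (le_max_right _ _), ?_⟩
      intro y hy
      have hky := key (max (φ kmin - φ (kmin+1)) 1)
        (by intro m hm1 hm2; omega)
        (by
          intro m hm1 hm2
          have := hchain (kmin+1) m (le_refl _) (by omega) hm2
          have e : (kmin+1) - 1 = kmin := by ring
          rw [e] at this
          exact le_trans this (le_max_left _ _))
        (innerb b y) (hlev y hy).1 (hlev y hy).2
      have h2 := hlb y hy
      rw [hbxk]
      push_cast at hky ⊢
      linarith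
    · -- kmin < k
      refine ⟨1, φ (k-1) - φ k, one_pos, hdpos k (by omega) hk2, ?_⟩
      intro y hy
      have hky := key (φ (k-1) - φ k)
        (by intro m hm1 hm2; exact hchain m k hm1 hm2 hk3)
        (by intro m hm1 hm2; exact hchain k m (by omega) (by omega) hm2)
        (innerb b y) (hlev y hy).1 (hlev y hy).2
      have h2 := hlb y hy
      rw [hbxk]
      push_cast at hky ⊢
      linarith


/-- each `x_k` for `k̲ ≤ k ≤ j` is a supported Pareto optimal point:
it is Pareto optimal, and some positive weights `λ₁, λ₂` make it minimize the
weighted sum `λ₁ g(·) + λ₂ ⟨b,·⟩` over `dom g`. -/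
theorem stmt_8 {E : Type*} [Fintype E] [DecidableEq E] [Nonempty E]
    (g : (E → ℤ) → WithTop ℝ) (b : E → ℤ)
    (hg : MnatConvex g)
    (hfin : {x : E → ℤ | g x < ⊤}.Finite)
    (hb : ∀ e : E, b e = 0 ∨ b e = 1)
    (kmin kmax : ℤ)
    (hkmin : (Tset g b kmin).Nonempty ∧ ∀ k : ℤ, (Tset g b k).Nonempty → kmin ≤ k)
    (hkmax : (Tset g b kmax).Nonempty ∧ ∀ k : ℤ, (Tset g b k).Nonempty → k ≤ kmax)
    (x : ℤ → (E → ℤ))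
    (hxk : ∀ k : ℤ, kmin ≤ k → k ≤ kmax → x k ∈ Tset g b k)
    (hstep : ∀ k : ℤ, kmin + 1 ≤ k → k ≤ kmax →
      ∃ (u : E) (v : Option E), IsMinTransition g b (x k) u v ∧
        x (k - 1) = x k - chiv u + chiOpt v)
    (hgap : kmin + 1 ≤ kmax)
    (j : ℤ) (hj1 : kmin + 1 ≤ j) (hj2 : j ≤ kmax)
    (hgj : g (x j) < g (x (j - 1))) :
    ∀ k : ℤ, kmin ≤ k → k ≤ j →
      (¬∃ y : E → ℤ, g y < ⊤ ∧ g y ≤ g (x k) ∧ innerb b y ≤ innerb b (x k) ∧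
        ¬(g y = g (x k) ∧ innerb b y = innerb b (x k))) ∧
      (∃ l1 l2 : ℝ, 0 < l1 ∧ 0 < l2 ∧
        ∀ y : E → ℤ, g y < ⊤ →
          l1 * WithTop.untopD 0 (g (x k)) + l2 * (innerb b (x k) : ℝ) ≤
            l1 * WithTop.untopD 0 (g y) + l2 * (innerb b y : ℝ)) := by
  exact stmt_8' g b hg hfin hb kmin kmax hkmin hkmax x hxk hgap j hj1 hj2 hgj
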